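/- Let X be a real vector space, â a symmetric bilinear form on X, b a bilinear form on X, â_h a symmetric bilinear form on X, and b_h a bilinear form on X. Let p̃, p̃_h, q, q_I, f, g ∈ X satisfy: â(q, v) = b(p̃ − p̃_h, v) for all v ∈ X; â(p̃, v) = b(f, v) for all v ∈ X; and â_h(p̃_h, q_I) = b_h(g, q_I). Then b(p̃ − p̃_h, p̃ − p̃_h) = â(q − q_I, p̃ − p̃_h) + [b(f, q_I) − b_h(g, q_I)] + [â_h(q_I, p̃_h) − â(q_I, p̃_h)]. -/
import Mathlib


/-- The algebraic decomposition behind the Aubin–Nitsche duality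
argument for the `L²` error estimate:
`b(p̃−p̃_h, p̃−p̃_h) = â(q−q_I, p̃−p̃_h) + [b(f,q_I) − b_h(g,q_I)]
  + [â_h(q_I, p̃_h) − â(q_I, p̃_h)]`. -/
theorem duality_argument_identity
    {X : Type*} [AddCommGroup X] [Module ℝ X]
    (ahat b ahath bh : X →ₗ[ℝ] X →ₗ[ℝ] ℝ)
    (hahat_symm : ∀ u v : X, ahat u v = ahat v u)
    (hahath_symm : ∀ u v : X, ahath u v = ahath v u)
    (ptil ptilh q qI f g : X)
    (hdual : ∀ v : X, ahat q v = b (ptil - ptilh) v)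
    (hsource : ∀ v : X, ahat ptil v = b f v)
    (hdisc : ahath ptilh qI = bh g qI) :
    b (ptil - ptilh) (ptil - ptilh) =
      ahat (q - qI) (ptil - ptilh) + (b f qI - bh g qI) +
        (ahath qI ptilh - ahat qI ptilh) := by
  have h1 := hdual (ptil - ptilh)
  have h2 := hsource qI
  have h3 : ahat qI ptil = b f qI := by rw [hahat_symm]; exact h2
  have h4 : ahath qI ptilh = bh g qI := by rw [hahath_symm]; exact hdisc
  simp only [map_sub, LinearMap.sub_apply] at *
  linarith
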